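/- (Robertson–Schrödinger uncertainty relation.) Let E be a complex Hilbert space, A and B self-adjoint continuous linear operators on E, and ψ ∈ E a unit vector. Let a = Re⟪ψ, A ψ⟫ and b = Re⟪ψ, B ψ⟫ be the expectation values, and define the variances (ΔA)² = ‖A ψ − a•ψ‖² and (ΔB)² = ‖B ψ − b•ψ‖². Then (ΔA)²·(ΔB)² ≥ (½·Re⟪ψ, i(BA − AB) ψ⟫)² + (½·Re⟪ψ, ((A − a)(B − b) + (B − b)(A − a)) ψ⟫)², where (A − a) denotes A − a•1 and (B − b) denotes B − b•1. -/

import Mathlib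

/-- Robertson–Schrödinger uncertainty relation: for self-adjoint `A, B` and a unit state
`ψ`, with expectation values `a, b` and variances `(ΔA)² = ‖Aψ − a•ψ‖²`,
`(ΔB)² = ‖Bψ − b•ψ‖²`, one has
`(ΔA)²(ΔB)² ≥ (½ Re⟪ψ, i(BA − AB)ψ⟫)² + (½ Re⟪ψ, ((A−a)(B−b) + (B−b)(A−a))ψ⟫)²`. -/
theorem robertson_schroedinger_uncertainty {E : Type*} [NormedAddCommGroup E]
    [InnerProductSpace ℂ E] [CompleteSpace E]
    (A B : E →L[ℂ] E)
    (hA : ContinuousLinearMap.adjoint A = A)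
    (hB : ContinuousLinearMap.adjoint B = B)
    (ψ : E) (hψ : ‖ψ‖ = 1)
    (a b : ℝ)
    (ha : a = (inner ℂ ψ (A ψ) : ℂ).re)
    (hb : b = (inner ℂ ψ (B ψ) : ℂ).re) :
    ‖A ψ - (a : ℂ) • ψ‖ ^ 2 * ‖B ψ - (b : ℂ) • ψ‖ ^ 2 ≥
      ((1 / 2 : ℝ) * (inner ℂ ψ (((Complex.I : ℂ) • (B.comp A - A.comp B)) ψ) : ℂ).re) ^ 2 +
      ((1 / 2 : ℝ) * (inner ℂ ψ
        ((((A - (a : ℂ) • 1).comp (B - (b : ℂ) • 1) +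
          (B - (b : ℂ) • 1).comp (A - (a : ℂ) • 1) : E →L[ℂ] E)) ψ) : ℂ).re) ^ 2 := by
  have hAsym : ∀ x y : E, (inner ℂ x (A y) : ℂ) = inner ℂ (A x) y := fun x y => by
    conv_rhs => rw [← hA]
    exact (ContinuousLinearMap.adjoint_inner_left A y x).symm
  have hBsym : ∀ x y : E, (inner ℂ x (B y) : ℂ) = inner ℂ (B x) y := fun x y => by
    conv_rhs => rw [← hB]
    exact (ContinuousLinearMap.adjoint_inner_left B y x).symm
  set u : E := A ψ - (a : ℂ) • ψ with hu
  set v : E := B ψ - (b : ℂ) • ψ with hv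
  set z : ℂ := inner ℂ u v with hzdef
  -- ψ normalized
  have hψψ : (inner ℂ ψ ψ : ℂ) = 1 := by
    rw [inner_self_eq_norm_sq_to_K, hψ]; norm_num
  -- expectation values as complex numbers
  have hpa : (inner ℂ ψ (A ψ) : ℂ) = (a : ℂ) := by
    have h := hAsym ψ ψ
    rw [← inner_conj_symm (A ψ) ψ] at h
    have him : (inner ℂ ψ (A ψ) : ℂ).im = 0 := by
      have := congrArg Complex.im h
      rw [Complex.conj_im] at this
      linarith
    apply Complex.ext <;> simp [← ha, him]
  have hpb : (inner ℂ ψ (B ψ) : ℂ) = (b : ℂ) := by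
    have h := hBsym ψ ψ
    rw [← inner_conj_symm (B ψ) ψ] at h
    have him : (inner ℂ ψ (B ψ) : ℂ).im = 0 := by
      have := congrArg Complex.im h
      rw [Complex.conj_im] at this
      linarith
    apply Complex.ext <;> simp [← hb, him]
  -- key: inner ψ (A' y) = inner u y  and  inner ψ (B' y) = inner v y
  have hAe : ∀ y : E, (inner ℂ ψ (A y - (a : ℂ) • y) : ℂ) = inner ℂ u y := fun y => by
    rw [hu, inner_sub_right, inner_sub_left, hAsym, inner_smul_right, inner_smul_left,
      Complex.conj_ofReal]
  have hBe : ∀ y : E, (inner ℂ ψ (B y - (b : ℂ) • y) : ℂ) = inner ℂ v y := fun y => by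
    rw [hv, inner_sub_right, inner_sub_left, hBsym, inner_smul_right, inner_smul_left,
      Complex.conj_ofReal]
  -- first term: commutator
  have h1 : (inner ℂ ψ (((Complex.I : ℂ) • (B.comp A - A.comp B)) ψ) : ℂ).re = 2 * z.im := by
    have hr : (inner ℂ ψ (B (A ψ)) : ℂ) - inner ℂ ψ (A (B ψ)) =
        (starRingEnd ℂ) z - z := by
      have e1 : (inner ℂ ψ (A (B ψ)) : ℂ) = inner ℂ (A ψ) (B ψ) := hAsym ψ (B ψ)
      have e2 : (inner ℂ ψ (B (A ψ)) : ℂ) = inner ℂ (B ψ) (A ψ) := hBsym ψ (A ψ)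
      have e3 : (inner ℂ (B ψ) (A ψ) : ℂ) = (starRingEnd ℂ) (inner ℂ (A ψ) (B ψ)) :=
        (inner_conj_symm _ _).symm
      have e4 : z = inner ℂ (A ψ) (B ψ) - (a : ℂ) * (b : ℂ) := by
        rw [hzdef, hu, hv, inner_sub_left, inner_sub_right, inner_sub_right,
          inner_smul_left, inner_smul_right, inner_smul_left, inner_smul_right,
          hψψ, ← inner_conj_symm (A ψ) ψ, hpa, hpb]
        simp [Complex.conj_ofReal]
        ring
      rw [e1, e2, e3, e4]
      simp [Complex.conj_ofReal]
    have happ : (((Complex.I : ℂ) • (B.comp A - A.comp B)) ψ) =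
        Complex.I • (B (A ψ) - A (B ψ)) := by
      simp [ContinuousLinearMap.smul_apply, ContinuousLinearMap.sub_apply]
    rw [happ, inner_smul_right, inner_sub_right, hr]
    simp [Complex.mul_re]
    ring
  -- second term: anticommutator
  have h2 : (inner ℂ ψ
        ((((A - (a : ℂ) • 1).comp (B - (b : ℂ) • 1) +
          (B - (b : ℂ) • 1).comp (A - (a : ℂ) • 1) : E →L[ℂ] E)) ψ) : ℂ).re = 2 * z.re := by
    have happ : ((((A - (a : ℂ) • 1).comp (B - (b : ℂ) • 1) +
          (B - (b : ℂ) • 1).comp (A - (a : ℂ) • 1) : E →L[ℂ] E)) ψ) =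
        (A v - (a : ℂ) • v) + (B u - (b : ℂ) • u) := by
      simp [ContinuousLinearMap.add_apply, ContinuousLinearMap.comp_apply,
        ContinuousLinearMap.sub_apply, ContinuousLinearMap.smul_apply,
        ContinuousLinearMap.one_apply, hu, hv]
      abel
    rw [happ, inner_add_right, hAe v, hBe u]
    have : (inner ℂ v u : ℂ) = (starRingEnd ℂ) z := by rw [hzdef, inner_conj_symm]
    rw [this]
    simp
    ring
  rw [h1, h2]
  have hcs : ‖z‖ ≤ ‖u‖ * ‖v‖ := norm_inner_le_norm u v
  have hcs2 : ‖z‖ ^ 2 ≤ ‖u‖ ^ 2 * ‖v‖ ^ 2 := by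
    rw [← mul_pow]
    exact pow_le_pow_left₀ (norm_nonneg z) hcs 2
  have hns : ‖z‖ ^ 2 = z.re ^ 2 + z.im ^ 2 := by
    rw [Complex.sq_norm, Complex.normSq_apply]; ring
  nlinarith [hcs2, hns]
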